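/- arXiv:1706.04691 — 3 statements merged into one kernel-verified Lean document; each statement's English description precedes it below -/
import Mathlib

section
/- The commensurator N_G[H] of the infinite cyclic subgroup H generated by a nontrivial translation A = (1,t;0,1) in G = PSL_2(O_k) consists exactly of the (classes of) translations (1, s; 0, 1), s ∈ O_k, and hence is isomorphic to ℤ^n where n = [k : ℚ]. In particular N_G[H] = N_G(H). -/
open Matrix

namespace PSLAux

variable {R : Type*} [CommRing R]

/-- The translation matrix `(1 s; 0 1)` as an element of `SL(2,R)`. -/
def T (s : R) : Matrix.SpecialLinearGroup (Fin 2) R :=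
  ⟨!![1, s; 0, 1], by simp [Matrix.det_fin_two_of]⟩

lemma coe_T (s : R) : (T s : Matrix (Fin 2) (Fin 2) R) = !![1, s; 0, 1] := rfl

lemma T_mul (s u : R) : T s * T u = T (s + u) := by
  apply Subtype.ext
  rw [Matrix.SpecialLinearGroup.coe_mul, coe_T, coe_T, coe_T, Matrix.mul_fin_two]
  norm_num [add_comm]

lemma T_zero : T (0 : R) = 1 := by
  apply Subtype.ext
  rw [coe_T, Matrix.SpecialLinearGroup.coe_one, Matrix.one_fin_two]

lemma T_inv (s : R) : (T s)⁻¹ = T (-s) :=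
  inv_eq_of_mul_eq_one_right (by rw [T_mul, add_neg_cancel, T_zero])

lemma T_zpow (s : R) (n : ℤ) : T s ^ n = T ((n : R) * s) := by
  induction n using Int.induction_on with
  | zero => rw [zpow_zero, Int.cast_zero, zero_mul, T_zero]
  | succ k ih => rw [_root_.zpow_add, zpow_one, ih, T_mul]; congr 1; push_cast; ring
  | pred k ih =>
      rw [sub_eq_add_neg, _root_.zpow_add, ih, _root_.zpow_neg_one, T_inv, T_mul]
      congr 1; push_cast; ring

lemma conj_T (B : Matrix.SpecialLinearGroup (Fin 2) R) (u : R) :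
    (↑(B * T u * B⁻¹) : Matrix (Fin 2) (Fin 2) R) =
      !![1 - B 0 0 * B 1 0 * u, B 0 0 ^ 2 * u;
         -(B 1 0 ^ 2 * u), 1 + B 0 0 * B 1 0 * u] := by
  have hdet : B 0 0 * B 1 1 - B 0 1 * B 1 0 = 1 := by
    have h2 := B.2
    rwa [Matrix.det_fin_two] at h2
  rw [Matrix.SpecialLinearGroup.coe_mul, Matrix.SpecialLinearGroup.coe_mul,
      Matrix.SpecialLinearGroup.coe_inv, Matrix.adjugate_fin_two, coe_T]
  ext i j
  fin_cases i <;> fin_cases j <;>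
    simp [Matrix.mul_apply, Fin.sum_univ_two] <;>
    first | ring1 | linear_combination hdet | linear_combination -hdet | linear_combination 2*hdet | linear_combination u*hdet | linear_combination (-u)*hdet

lemma scalar_fin_two (r : R) : (Matrix.scalar (Fin 2) r) = !![r, 0; 0, r] := by
  ext i j
  fin_cases i <;> fin_cases j <;>
    simp [Matrix.scalar_apply, Matrix.diagonal]


open NumberField


lemma int_of_integral_rat {q : ℚ} (h : IsIntegral ℤ q) : ∃ z : ℤ, (z : ℚ) = q :=
  IsIntegrallyClosed.isIntegral_iff.mp h

/-- If `a` is a unit of `𝓞 K` with `n • a² = m` for nonzero integers, then `a² = 1`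
(using a real embedding of `K`). -/
lemma sq_eq_one_of_unit (K : Type) [Field K] [NumberField K] (f : K →+* ℝ)
    {a d : 𝓞 K} {n m : ℤ} (hn : n ≠ 0) (had : a * d = 1)
    (h1 : (n : 𝓞 K) * a ^ 2 = (m : 𝓞 K)) : a ^ 2 = 1 := by
  have ha : a ≠ 0 := fun h0 => by simp [h0] at had
  have hm : m ≠ 0 := by
    rintro rfl
    rw [Int.cast_zero, mul_eq_zero] at h1
    rcases h1 with h | h
    · exact hn (by exact_mod_cast h)
    · exact ha (pow_eq_zero_iff two_ne_zero |>.mp h)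
  have h2 : (m : 𝓞 K) * d ^ 2 = (n : 𝓞 K) := by
    linear_combination (-(d ^ 2)) * h1 + (n : 𝓞 K) * (a * d + 1) * had
  -- move to K
  set x : K := algebraMap (𝓞 K) K (a ^ 2) with hx
  set y : K := algebraMap (𝓞 K) K (d ^ 2) with hy
  have hxK : (n : K) * x = (m : K) := by
    have := congrArg (algebraMap (𝓞 K) K) h1
    simpa [_root_.map_mul, map_intCast, hx] using this
  have hyK : (m : K) * y = (n : K) := by
    have := congrArg (algebraMap (𝓞 K) K) h2
    simpa [_root_.map_mul, map_intCast, hy] using this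
  have hnK : (n : K) ≠ 0 := Int.cast_ne_zero.mpr hn
  have hmK : (m : K) ≠ 0 := Int.cast_ne_zero.mpr hm
  have hxq : x = ((m / n : ℚ) : K) := by
    push_cast
    field_simp
    linear_combination hxK
  have hyq : y = ((n / m : ℚ) : K) := by
    push_cast
    field_simp
    linear_combination hyK
  have hxint : IsIntegral ℤ ((m / n : ℚ)) := by
    rw [show ((m / n : ℚ) : K) = algebraMap ℚ K (m / n : ℚ) from rfl] at hxq
    exact (isIntegral_algebraMap_iff (algebraMap ℚ K).injective).mp
      (hxq ▸ RingOfIntegers.isIntegral_coe (a ^ 2))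
  have hyint : IsIntegral ℤ ((n / m : ℚ)) := by
    rw [show ((n / m : ℚ) : K) = algebraMap ℚ K (n / m : ℚ) from rfl] at hyq
    exact (isIntegral_algebraMap_iff (algebraMap ℚ K).injective).mp
      (hyq ▸ RingOfIntegers.isIntegral_coe (d ^ 2))
  obtain ⟨z, hz⟩ := int_of_integral_rat hxint
  obtain ⟨w, hw⟩ := int_of_integral_rat hyint
  have hxz : x = (z : K) := by rw [hxq, ← hz]; push_cast; ring
  have hyw : y = (w : K) := by rw [hyq, ← hw]; push_cast; ring
  have hxy : x * y = 1 := by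
    rw [hx, hy, ← _root_.map_mul]
    have : a ^ 2 * d ^ 2 = 1 := by linear_combination (a * d + 1) * had
    rw [this, _root_.map_one]
  have hzw : z * w = 1 := by
    have : ((z * w : ℤ) : K) = ((1 : ℤ) : K) := by
      push_cast
      rw [← hxz, ← hyw, hxy]
    exact_mod_cast this
  rcases Int.mul_eq_one_iff_eq_one_or_neg_one.mp hzw with ⟨hz1, _⟩ | ⟨hz1, _⟩
  · -- z = 1
    have : x = 1 := by rw [hxz, hz1]; norm_num
    have := congrArg f this
    have hinj := RingOfIntegers.coe_injective (K := K)
    apply hinj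
    rw [show algebraMap (𝓞 K) K (a ^ 2) = x from rfl, ‹x = 1›, _root_.map_one]
  · -- z = -1 : contradiction with real embedding
    exfalso
    have hx1 : x = -1 := by rw [hxz, hz1]; push_cast; ring
    have : f x = -1 := by rw [hx1]; simp
    have hsq : f x = (f (algebraMap (𝓞 K) K a)) ^ 2 := by
      rw [hx, _root_.map_pow, _root_.map_pow]
    nlinarith [sq_nonneg (f (algebraMap (𝓞 K) K a))]


end PSLAux


set_option maxHeartbeats 2000000 in
open NumberField Matrix in
/-- The commensurator `N_G[H]` of the infinite cyclic subgroup `H` generated by (the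
class of) a nontrivial translation `A = (1 t; 0 1)` in `G = PSL₂(O_k)` (`k` totally real
of degree `n` over `ℚ`) consists exactly of the classes of translations `(1 s; 0 1)`,
`s ∈ O_k`; it coincides with the normalizer `N_G(H)` and is isomorphic to `ℤⁿ`. -/
theorem commensurator_of_parabolic (K : Type) [Field K] [NumberField K] (f : K →+* ℝ)
    (t : NumberField.RingOfIntegers K) (ht : t ≠ 0)
    (A : Matrix.SpecialLinearGroup (Fin 2) (NumberField.RingOfIntegers K))
    (hA : (A : Matrix (Fin 2) (Fin 2) (NumberField.RingOfIntegers K)) = !![1, t; 0, 1]) :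
    let p := QuotientGroup.mk'
      (Subgroup.center (Matrix.SpecialLinearGroup (Fin 2) (NumberField.RingOfIntegers K)))
    let α : Matrix.ProjectiveSpecialLinearGroup (Fin 2) (NumberField.RingOfIntegers K) := p A
    -- the commensurator is exactly the set of classes of translations …
    ({g : Matrix.ProjectiveSpecialLinearGroup (Fin 2) (NumberField.RingOfIntegers K) |
        ∃ n m : ℤ, n ≠ 0 ∧ m ≠ 0 ∧ g * α ^ n * g⁻¹ = α ^ m} =
      {g : Matrix.ProjectiveSpecialLinearGroup (Fin 2) (NumberField.RingOfIntegers K) |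
        ∃ s : NumberField.RingOfIntegers K,
          ∃ B : Matrix.SpecialLinearGroup (Fin 2) (NumberField.RingOfIntegers K),
            (B : Matrix (Fin 2) (Fin 2) (NumberField.RingOfIntegers K)) = !![1, s; 0, 1] ∧
            g = p B}) ∧
    -- … it coincides with the normalizer N_G(H) …
    ({g : Matrix.ProjectiveSpecialLinearGroup (Fin 2) (NumberField.RingOfIntegers K) |
        ∃ n m : ℤ, n ≠ 0 ∧ m ≠ 0 ∧ g * α ^ n * g⁻¹ = α ^ m} =
      ((Subgroup.normalizer (Subgroup.zpowers α : Set (Matrix.ProjectiveSpecialLinearGroup (Fin 2) (NumberField.RingOfIntegers K)))) :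
        Set (Matrix.ProjectiveSpecialLinearGroup (Fin 2) (NumberField.RingOfIntegers K)))) ∧
    -- … and it is isomorphic to ℤⁿ with n = [k : ℚ].
    Nonempty ((Subgroup.normalizer (Subgroup.zpowers α : Set (Matrix.ProjectiveSpecialLinearGroup (Fin 2) (NumberField.RingOfIntegers K)))) ≃*
      Multiplicative (Fin (Module.finrank ℚ K) → ℤ)) := by
  intro p α
  have pk : ∀ B C : Matrix.SpecialLinearGroup (Fin 2) (𝓞 K),
      p B = p C ↔ ∃ z ∈ Subgroup.center (Matrix.SpecialLinearGroup (Fin 2) (𝓞 K)),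
        B * z = C := fun B C => QuotientGroup.mk'_eq_mk' _
  have psurj : Function.Surjective p := QuotientGroup.mk'_surjective _
  have hα : α = p A := rfl
  have hA' : A = PSLAux.T t := Subtype.ext (by rw [hA]; rfl)
  have hAz : ∀ k : ℤ, A ^ k = PSLAux.T ((k : 𝓞 K) * t) := fun k => by
    rw [hA', PSLAux.T_zpow]
  have gag : ∀ s : 𝓞 K, p (PSLAux.T s) * α * (p (PSLAux.T s))⁻¹ = α := fun s => by
    rw [hα, ← _root_.map_inv, ← _root_.map_mul, ← _root_.map_mul, PSLAux.T_inv, hA',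
      PSLAux.T_mul, PSLAux.T_mul]
    congr 2
    ring
  -- main characterization of the commensurator
  have main : ∀ g, (∃ n m : ℤ, n ≠ 0 ∧ m ≠ 0 ∧ g * α ^ n * g⁻¹ = α ^ m) ↔
      ∃ s : 𝓞 K, g = p (PSLAux.T s) := by
    intro g
    constructor
    · rintro ⟨n, m, hn, hm, hconj⟩
      obtain ⟨B, rfl⟩ := psurj g
      have hconj' : p (B * A ^ n * B⁻¹) = p (A ^ m) := by
        rw [_root_.map_mul, _root_.map_mul, _root_.map_inv, map_zpow, map_zpow, ← hα]
        exact hconj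
      obtain ⟨z, hz, hzeq⟩ := (pk _ _).mp hconj'
      obtain ⟨r, hr2, hrz⟩ := Matrix.SpecialLinearGroup.mem_center_iff.mp hz
      rw [Fintype.card_fin] at hr2
      have hmat : (↑(B * A ^ n * B⁻¹) : Matrix (Fin 2) (Fin 2) (𝓞 K)) *
          !![r, 0; 0, r] = !![1, (m : 𝓞 K) * t; 0, 1] := by
        rw [← PSLAux.scalar_fin_two, hrz, ← Matrix.SpecialLinearGroup.coe_mul, hzeq,
          hAz m, PSLAux.coe_T]
      rw [hAz n, PSLAux.conj_T] at hmat
      set a := B 0 0 with ha_def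
      set b := B 0 1 with hb_def
      set c := B 1 0 with hc_def
      set d := B 1 1 with hd_def
      rw [Matrix.mul_fin_two] at hmat
      have e00 := congrFun (congrFun hmat 0) 0
      have e01 := congrFun (congrFun hmat 0) 1
      have e10 := congrFun (congrFun hmat 1) 0
      simp only [Matrix.of_apply, Matrix.cons_val', Matrix.cons_val_zero, Matrix.cons_val_one,
        Matrix.head_cons, Matrix.head_fin_const, Matrix.empty_val',
        Matrix.cons_val_fin_one] at e00 e01 e10
      have hu : ((n : 𝓞 K) * t) ≠ 0 := mul_ne_zero (Int.cast_ne_zero.mpr hn) ht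
      have hc : c = 0 := by
        have h0 : c ^ 2 * ((n : 𝓞 K) * t) * (r * r) = 0 := by linear_combination (-r) * e10
        rw [← pow_two, hr2, mul_one] at h0
        rcases mul_eq_zero.mp h0 with h | h
        · exact pow_eq_zero_iff two_ne_zero |>.mp h
        · exact absurd h hu
      have hr1 : r = 1 := by
        rw [hc] at e00
        linear_combination e00
      have hdet : a * d = 1 := by
        have h2 := B.2
        rw [Matrix.det_fin_two] at h2
        rw [← ha_def, ← hb_def, ← hc_def, ← hd_def, hc] at h2
        linear_combination h2
      have h1 : (n : 𝓞 K) * a ^ 2 = (m : 𝓞 K) := by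
        rw [hr1] at e01
        have h3 : (n : 𝓞 K) * a ^ 2 * t = (m : 𝓞 K) * t := by linear_combination e01
        exact mul_right_cancel₀ ht h3
      have ha2 : a ^ 2 = 1 := PSLAux.sq_eq_one_of_unit K f hn hdet h1
      have hda : d = a := by linear_combination (-d) * ha2 + a * hdet
      refine ⟨a * b, ?_⟩
      have hBmat : (B : Matrix (Fin 2) (Fin 2) (𝓞 K)) = !![a, b; 0, a] := by
        rw [Matrix.eta_fin_two (B : Matrix (Fin 2) (Fin 2) (𝓞 K)), ← ha_def, ← hb_def,
          ← hc_def, ← hd_def, hc, hda]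
      apply (pk _ _).mpr
      refine ⟨⟨!![a, 0; 0, a], by rw [Matrix.det_fin_two_of]; linear_combination ha2⟩,
        Matrix.SpecialLinearGroup.mem_center_iff.mpr ⟨a, ?_, ?_⟩, ?_⟩
      · rw [Fintype.card_fin]; exact ha2
      · rw [PSLAux.scalar_fin_two]
      · apply Subtype.ext
        show (B : Matrix (Fin 2) (Fin 2) (𝓞 K)) * !![a, 0; 0, a] = !![1, a * b; 0, 1]
        rw [hBmat, Matrix.mul_fin_two]
        congrm !![?_, ?_; ?_, ?_]
        · linear_combination ha2
        · ring
        · ring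
        · linear_combination ha2
    · rintro ⟨s, rfl⟩
      exact ⟨1, 1, one_ne_zero, one_ne_zero, by simpa using gag s⟩
  -- α is not trivial
  have hα1 : α ≠ 1 := by
    intro h
    have hmem : A ∈ Subgroup.center (Matrix.SpecialLinearGroup (Fin 2) (𝓞 K)) :=
      (QuotientGroup.eq_one_iff A).mp h
    obtain ⟨r, _, hrz⟩ := Matrix.SpecialLinearGroup.mem_center_iff.mp hmem
    rw [PSLAux.scalar_fin_two, hA] at hrz
    have h01 := congrFun (congrFun hrz 0) 1
    simp only [Matrix.of_apply, Matrix.cons_val', Matrix.cons_val_zero, Matrix.cons_val_one,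
      Matrix.head_cons, Matrix.head_fin_const, Matrix.empty_val',
      Matrix.cons_val_fin_one] at h01
    exact ht h01.symm
  have eq1 : {g : Matrix.ProjectiveSpecialLinearGroup (Fin 2) (𝓞 K) |
      ∃ n m : ℤ, n ≠ 0 ∧ m ≠ 0 ∧ g * α ^ n * g⁻¹ = α ^ m} =
      {g : Matrix.ProjectiveSpecialLinearGroup (Fin 2) (𝓞 K) |
        ∃ s : 𝓞 K, ∃ B : Matrix.SpecialLinearGroup (Fin 2) (𝓞 K),
          (B : Matrix (Fin 2) (Fin 2) (𝓞 K)) = !![1, s; 0, 1] ∧ g = p B} := by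
    ext g
    simp only [Set.mem_setOf_eq]
    rw [main g]
    constructor
    · rintro ⟨s, hg⟩
      exact ⟨s, PSLAux.T s, rfl, hg⟩
    · rintro ⟨s, B, hB, hg⟩
      exact ⟨s, by rw [hg]; congr 1; exact Subtype.ext hB⟩
  have eq2 : {g : Matrix.ProjectiveSpecialLinearGroup (Fin 2) (𝓞 K) |
      ∃ n m : ℤ, n ≠ 0 ∧ m ≠ 0 ∧ g * α ^ n * g⁻¹ = α ^ m} =
      ((Subgroup.normalizer (Subgroup.zpowers α : Set (Matrix.ProjectiveSpecialLinearGroup (Fin 2) (𝓞 K)))) :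
        Set (Matrix.ProjectiveSpecialLinearGroup (Fin 2) (𝓞 K))) := by
    ext g
    simp only [Set.mem_setOf_eq, SetLike.mem_coe]
    rw [main g]
    constructor
    · rintro ⟨s, rfl⟩
      have key2 : ∀ k : ℤ, p (PSLAux.T s) * α ^ k * (p (PSLAux.T s))⁻¹ = α ^ k := fun k => by
        rw [← conj_zpow, gag]
      have key3 : ∀ k : ℤ, (p (PSLAux.T s))⁻¹ * α ^ k * p (PSLAux.T s) = α ^ k := fun k => by
        calc (p (PSLAux.T s))⁻¹ * α ^ k * p (PSLAux.T s)
            = (p (PSLAux.T s))⁻¹ * (p (PSLAux.T s) * α ^ k * (p (PSLAux.T s))⁻¹) *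
              p (PSLAux.T s) := by rw [key2]
          _ = α ^ k := by group
      rw [Subgroup.mem_normalizer_iff]
      intro h
      constructor
      · rintro ⟨k, rfl⟩
        exact ⟨k, (key2 k).symm⟩
      · rintro ⟨k, hk⟩
        refine ⟨k, ?_⟩
        have hh : (p (PSLAux.T s))⁻¹ * (p (PSLAux.T s) * h * (p (PSLAux.T s))⁻¹) *
            p (PSLAux.T s) = h := by group
        rw [← hh, ← hk, key3]
    · intro hg
      obtain ⟨m, hm⟩ := (Subgroup.mem_normalizer_iff.mp hg α).mp (Subgroup.mem_zpowers α)
      have hm0 : m ≠ 0 := by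
        rintro rfl
        simp only [zpow_zero] at hm
        apply hα1
        have hα' : α = g⁻¹ * (g * α * g⁻¹) * g := by group
        rw [hα', ← hm]
        group
      exact (main g).mp ⟨1, m, one_ne_zero, hm0, by rw [zpow_one]; exact hm.symm⟩
  refine ⟨eq1, eq2, ?_⟩
  -- the isomorphism with ℤ^n
  let φ : Multiplicative (𝓞 K) →* Matrix.ProjectiveSpecialLinearGroup (Fin 2) (𝓞 K) :=
    MonoidHom.mk' (fun s => p (PSLAux.T s.toAdd)) (by
      intro x y
      rw [← _root_.map_mul, PSLAux.T_mul]
      rfl)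
  have hφ : ∀ s : 𝓞 K, φ (Multiplicative.ofAdd s) = p (PSLAux.T s) := fun s => rfl
  have hinj : Function.Injective φ := by
    intro x y hxy
    have h : p (PSLAux.T x.toAdd) = p (PSLAux.T y.toAdd) := hxy
    obtain ⟨z, hz, hzeq⟩ := (pk _ _).mp h
    obtain ⟨r, hr2, hrz⟩ := Matrix.SpecialLinearGroup.mem_center_iff.mp hz
    rw [Fintype.card_fin] at hr2
    have hmat : (!![1, x.toAdd; 0, 1] : Matrix (Fin 2) (Fin 2) (𝓞 K)) * !![r, 0; 0, r] =
        !![1, y.toAdd; 0, 1] := by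
      rw [← PSLAux.coe_T, ← PSLAux.scalar_fin_two, hrz, ← Matrix.SpecialLinearGroup.coe_mul,
        hzeq, PSLAux.coe_T]
    rw [Matrix.mul_fin_two] at hmat
    have e00 := congrFun (congrFun hmat 0) 0
    have e01 := congrFun (congrFun hmat 0) 1
    simp only [Matrix.of_apply, Matrix.cons_val', Matrix.cons_val_zero, Matrix.cons_val_one,
      Matrix.head_cons, Matrix.head_fin_const, Matrix.empty_val',
      Matrix.cons_val_fin_one] at e00 e01
    have hr1 : r = 1 := by linear_combination e00
    have hxyadd : x.toAdd = y.toAdd := by rw [hr1] at e01; linear_combination e01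
    exact Multiplicative.toAdd.injective hxyadd
  have hrange : φ.range = Subgroup.normalizer (Subgroup.zpowers α : Set (Matrix.ProjectiveSpecialLinearGroup (Fin 2) (𝓞 K))) := by
    ext x
    rw [MonoidHom.mem_range]
    have hset := Set.ext_iff.mp eq2 x
    simp only [Set.mem_setOf_eq, SetLike.mem_coe] at hset
    rw [main x] at hset
    rw [← hset]
    constructor
    · rintro ⟨y, rfl⟩
      exact ⟨y.toAdd, rfl⟩
    · rintro ⟨s, rfl⟩
      exact ⟨Multiplicative.ofAdd s, rfl⟩
  have e : Module.Free.ChooseBasisIndex ℤ (𝓞 K) ≃ Fin (Module.finrank ℚ K) :=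
    Fintype.equivFinOfCardEq (by
      rw [← Module.finrank_eq_card_chooseBasisIndex, NumberField.RingOfIntegers.rank])
  let ℓ : (𝓞 K) ≃ₗ[ℤ] (Fin (Module.finrank ℚ K) → ℤ) :=
    ((Module.Free.chooseBasis ℤ (𝓞 K)).reindex e).equivFun
  exact ⟨((MulEquiv.subgroupCongr hrange.symm).trans (MonoidHom.ofInjective hinj).symm).trans
    (AddEquiv.toMultiplicative ℓ.toAddEquiv)⟩
end

section
/- Every virtually cyclic group is either finite, or surjects onto ℤ with finite kernel, or surjects onto the infinite dihedral group D_∞ with finite kernel. -/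
open Subgroup Function

namespace VCaux

variable {G : Type*} [Group G]

lemma finite_of_trivial_inter (N K : Subgroup G) [N.FiniteIndex]
    (h : ∀ x, x ∈ K → x ∈ N → x = 1) : Finite K := by
  have hinj : Function.Injective (fun k : K => (QuotientGroup.mk (k : G) : G ⧸ N)) := by
    intro a b hab
    rw [QuotientGroup.eq] at hab
    have := h _ (mul_mem (inv_mem a.2) b.2) hab
    exact Subtype.ext (inv_mul_eq_one.mp this)
  exact Finite.of_injective _ hinj

noncomputable def equivInt (a : G) (ha : ¬IsOfFinOrder a) (hgen : ∀ x : G, x ∈ zpowers a) :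
    G ≃* Multiplicative ℤ := by
  refine (MulEquiv.ofBijective (zpowersHom G a) ⟨?_, ?_⟩).symm
  · have h1 : Injective (fun k : ℤ => a ^ k) := injective_zpow_iff_not_isOfFinOrder.2 ha
    intro m n hmn
    exact Multiplicative.toAdd.injective (h1 hmn)
  · intro x
    obtain ⟨k, hk⟩ := mem_zpowers_iff.mp (hgen x)
    exact ⟨Multiplicative.ofAdd k, hk⟩

lemma hom_trivial (N : Subgroup G) [N.FiniteIndex] (χ : G →* Multiplicative ℤ)
    (h : ∀ x ∈ N, χ x = 1) : ∀ x, χ x = 1 := by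
  intro x
  have hle : N ≤ χ.ker := fun y hy => h y hy
  haveI : χ.ker.FiniteIndex := Subgroup.finiteIndex_of_le hle
  haveI : χ.ker.Normal := MonoidHom.normal_ker χ
  have hmem : x ^ χ.ker.index ∈ χ.ker := Subgroup.pow_index_mem χ.ker x
  have hpow : (χ x) ^ χ.ker.index = 1 := by
    rw [← map_pow]; exact hmem
  have hne : χ.ker.index ≠ 0 := Subgroup.FiniteIndex.index_ne_zero
  have := congrArg Multiplicative.toAdd hpow
  simp only [toAdd_pow, toAdd_one, smul_eq_mul] at this
  have h0 : Multiplicative.toAdd (χ x) = 0 := by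
    rcases mul_eq_zero.mp this with h | h
    · exact absurd (Nat.cast_eq_zero.mp h) hne
    · exact h
  · exact Multiplicative.toAdd.injective (by simpa using h0)

end VCaux

namespace VCaux

variable {G : Type*} [Group G]

lemma central_case (g : G) (hg : ¬IsOfFinOrder g) [hfi : (zpowers g).FiniteIndex]
    (hc : ∀ x : G, x * g = g * x) :
    ∃ ψ : G →* Multiplicative ℤ, Surjective ψ ∧ Finite ψ.ker := by
  classical
  have hgc : g ∈ Subgroup.center G := Subgroup.mem_center_iff.mpr (fun b => hc b)
  have hle : zpowers g ≤ Subgroup.center G := zpowers_le.mpr hgc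
  haveI : (Subgroup.center G).FiniteIndex := Subgroup.finiteIndex_of_le hle
  haveI hnorm : (zpowers g).Normal := by
    constructor
    intro a ha b
    have hac : ∀ c : G, c * a = a * c := fun c => Subgroup.mem_center_iff.mp (hle ha) c
    have : b * a * b⁻¹ = a := by rw [hac b, mul_assoc, mul_inv_cancel, mul_one]
    rwa [this]
  set n := (Subgroup.center G).index with hn
  set m := (zpowers g).index with hm
  have hcen : ∀ x : G, x ^ n ∈ Subgroup.center G := by
    intro x
    have h := MonoidHom.transferCenterPow_apply (G := G) x
    rw [← h]; exact (MonoidHom.transferCenterPow G x).2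
  have hmem : ∀ x : G, x ^ (n * m) ∈ zpowers g := by
    intro x
    have h2 : (x ^ n) ^ m ∈ zpowers g := Subgroup.pow_index_mem (zpowers g) _
    rwa [← pow_mul] at h2
  have inj : ∀ j k : ℤ, g ^ j = g ^ k → j = k :=
    fun j k h => injective_zpow_iff_not_isOfFinOrder.2 hg h
  have key : ∀ x : G, ∃ k : ℤ, g ^ k = x ^ (n * m) := fun x => mem_zpowers_iff.mp (hmem x)
  set F : G → ℤ := fun x => Classical.choose (key x) with hF
  have hFs : ∀ x, g ^ (F x) = x ^ (n * m) := fun x => Classical.choose_spec (key x)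
  have hpowmul : ∀ x y : G, (x * y) ^ (n*m) = x ^ (n*m) * y ^ (n*m) := by
    intro x y
    have hxy : (x*y) ^ n = x ^ n * y ^ n := by
      have e1 := MonoidHom.transferCenterPow_apply (G := G) (x*y)
      have e2 := congrArg (Subtype.val) (map_mul (MonoidHom.transferCenterPow G) x y)
      rw [MonoidHom.transferCenterPow_apply] at e2
      rw [e2]; push_cast [MonoidHom.transferCenterPow_apply]; rfl
    have hcomm : Commute (x ^ n) (y ^ n) :=
      (Subgroup.mem_center_iff.mp (hcen x) (y ^ n)).symm
    calc (x*y)^(n*m) = ((x*y)^n)^m := pow_mul _ _ _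
      _ = (x^n * y^n)^m := by rw [hxy]
      _ = (x^n)^m * (y^n)^m := hcomm.mul_pow m
      _ = x^(n*m) * y^(n*m) := by rw [← pow_mul, ← pow_mul]
  have hFadd : ∀ x y, F (x*y) = F x + F y := by
    intro x y
    apply inj
    rw [zpow_add, hFs, hFs, hFs, hpowmul]
  set Fhom : G →* Multiplicative ℤ :=
    { toFun := fun x => Multiplicative.ofAdd (F x)
      map_one' := by
        have h1 : F 1 = 0 := by
          apply inj
          rw [hFs, zpow_zero, one_pow]
        simp [h1]
      map_mul' := fun x y => by
        show Multiplicative.ofAdd (F (x*y)) = Multiplicative.ofAdd (F x) * Multiplicative.ofAdd (F y)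
        rw [hFadd x y, ofAdd_add] } with hFhom
  have hFhomval : ∀ x, Fhom x = Multiplicative.ofAdd (F x) := fun x => rfl
  have hne : (n*m : ℕ) ≠ 0 :=
    Nat.mul_ne_zero Subgroup.FiniteIndex.index_ne_zero Subgroup.FiniteIndex.index_ne_zero
  have hFg : F g = ((n*m : ℕ) : ℤ) := by
    apply inj
    rw [hFs, zpow_natCast]
  have hker : Finite Fhom.ker := by
    apply finite_of_trivial_inter (zpowers g)
    intro x hxK hxN
    obtain ⟨k, hk⟩ := mem_zpowers_iff.mp hxN
    have hx1 : F x = 0 := by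
      have h2 : Multiplicative.ofAdd (F x) = 1 := hxK
      simpa using h2
    have hxp : x ^ (n*m) = 1 := by rw [← hFs, hx1, zpow_zero]
    rw [← hk, ← zpow_natCast, ← zpow_mul] at hxp
    have h3 : k * ((n*m : ℕ) : ℤ) = 0 := by
      apply inj
      rw [zpow_zero]
      exact hxp
    rcases mul_eq_zero.mp h3 with h | h
    · rw [← hk, h, zpow_zero]
    · exact absurd (Nat.cast_eq_zero.mp h) hne
  -- the range is infinite cyclic
  haveI : IsCyclic (Multiplicative ℤ) := inferInstance
  obtain ⟨a, hgen⟩ := IsCyclic.exists_generator (α := Fhom.range)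
  have hFgR : (⟨Fhom g, ⟨g, rfl⟩⟩ : Fhom.range) ∈ zpowers a := hgen _
  have hane : a ≠ 1 := by
    intro h1
    obtain ⟨k, hk⟩ := mem_zpowers_iff.mp hFgR
    rw [h1, one_zpow] at hk
    have : Fhom g = 1 := by
      have := congrArg Subtype.val hk.symm
      simpa using this
    rw [hFhomval, hFg] at this
    have h7 := congrArg Multiplicative.toAdd this
    rw [toAdd_ofAdd, toAdd_one] at h7
    exact hne (by exact_mod_cast h7)
  have hafin : ¬IsOfFinOrder a := by
    intro hfo
    obtain ⟨k, hk0, hk⟩ := isOfFinOrder_iff_pow_eq_one.mp hfo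
    have h2 : (a : Multiplicative ℤ) ^ k = 1 := by
      have := congrArg Subtype.val hk
      simpa using this
    have h3 := congrArg Multiplicative.toAdd h2
    simp only [toAdd_pow, toAdd_one, smul_eq_mul] at h3
    have h4 : Multiplicative.toAdd (a : Multiplicative ℤ) = 0 := by
      rcases mul_eq_zero.mp h3 with h | h
      · omega
      · exact h
    have h5 : (a : Multiplicative ℤ) = 1 := Multiplicative.toAdd.injective (by simpa using h4)
    exact hane (Subtype.ext h5)
  let e := equivInt a hafin hgen
  refine ⟨e.toMonoidHom.comp Fhom.rangeRestrict, ?_, ?_⟩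
  · exact e.surjective.comp Fhom.rangeRestrict_surjective
  · have hkeq : (e.toMonoidHom.comp Fhom.rangeRestrict).ker = Fhom.ker := by
      ext x
      simp only [MonoidHom.mem_ker, MonoidHom.comp_apply, MulEquiv.coe_toMonoidHom]
      rw [map_eq_one_iff _ e.injective]
      constructor
      · intro h; have := congrArg Subtype.val h; simpa using this
      · intro h; exact Subtype.ext (by simpa using h)
    rw [hkeq]
    exact hker

end VCaux


namespace VCaux
variable {G : Type*} [Group G]

lemma finite_of_finite_index (H : Subgroup G) [H.FiniteIndex] (h : Finite H) : Finite G := by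
  have e := Subgroup.groupEquivQuotientProdSubgroup (s := H)
  haveI : Finite (G ⧸ H) := inferInstance
  exact Finite.of_equiv _ e.symm

lemma zpowers_isCyclic (g : G) : IsCyclic (zpowers g) := by
  refine ⟨⟨⟨g, mem_zpowers g⟩, ?_⟩⟩
  rintro ⟨x, hx⟩
  obtain ⟨k, hk⟩ := mem_zpowers_iff.mp hx
  exact ⟨k, Subtype.ext (by simpa using hk)⟩

end VCaux

/-- Every virtually cyclic group is either finite, or surjects onto `ℤ` with finite
kernel, or surjects onto the infinite dihedral group `D_∞` with finite kernel. -/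
theorem virtually_cyclic_trichotomy (V : Type) [Group V]
    (hvc : ∃ H : Subgroup V, IsCyclic H ∧ H.FiniteIndex) :
    Finite V ∨
    (∃ φ : V →* Multiplicative ℤ, Function.Surjective φ ∧ Finite φ.ker) ∨
    (∃ φ : V →* DihedralGroup 0, Function.Surjective φ ∧ Finite φ.ker) := by
  by_cases hfin : Finite V
  · exact Or.inl hfin
  right
  obtain ⟨H, hcyc, hidx⟩ := hvc
  -- a generator of H
  obtain ⟨⟨g, hgH⟩, hgen⟩ := IsCyclic.exists_generator (α := H)
  have hHg : H = zpowers g := by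
    apply le_antisymm
    · intro x hx
      obtain ⟨k, hk⟩ := hgen ⟨x, hx⟩
      have := congrArg Subtype.val hk
      simp only [SubgroupClass.coe_zpow] at this
      exact mem_zpowers_iff.mpr ⟨k, this⟩
    · exact zpowers_le.mpr hgH
  rw [hHg] at hidx
  haveI : (zpowers g).FiniteIndex := hidx
  clear hHg hgen hcyc hgH
  -- the normal core
  set N := (zpowers g).normalCore with hN
  haveI hNnorm : N.Normal := Subgroup.normalCore_normal _
  haveI hNidx : N.FiniteIndex := Subgroup.finiteIndex_normalCore _
  have hNinf : Infinite N := by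
    by_contra h
    have : Finite N := not_infinite_iff_finite.mp h
    exact hfin (VCaux.finite_of_finite_index N this)
  -- N is cyclic with generator g₀ of infinite order
  haveI : IsCyclic (zpowers g) := VCaux.zpowers_isCyclic g
  haveI : IsCyclic N := Subgroup.isCyclic_of_le (Subgroup.normalCore_le _)
  obtain ⟨⟨g₀, hg₀N⟩, hgen₀⟩ := IsCyclic.exists_generator (α := N)
  have hNg₀ : N = zpowers g₀ := by
    apply le_antisymm
    · intro x hx
      obtain ⟨k, hk⟩ := hgen₀ ⟨x, hx⟩
      have := congrArg Subtype.val hk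
      simp only [SubgroupClass.coe_zpow] at this
      exact mem_zpowers_iff.mpr ⟨k, this⟩
    · exact zpowers_le.mpr hg₀N
  have hg₀ : ¬IsOfFinOrder g₀ := by
    intro h
    have hfin' : (zpowers g₀ : Set V).Finite := h.finite_zpowers
    rw [← hNg₀] at hfin'
    have hfin2 : Finite N := Set.finite_coe_iff.mpr hfin'
    exact absurd hfin2 (not_finite_iff_infinite.mpr hNinf)
  haveI hfidx : (zpowers g₀).FiniteIndex := hNg₀ ▸ hNidx
  have hg₀ne : g₀ ≠ g₀⁻¹ := by
    intro h
    apply hg₀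
    apply isOfFinOrder_iff_pow_eq_one.mpr ⟨2, by norm_num, ?_⟩
    rw [pow_two]
    nth_rewrite 1 [h]
    exact inv_mul_cancel g₀
  -- dichotomy for conjugation
  have dich : ∀ v : V, v * g₀ * v⁻¹ = g₀ ∨ v * g₀ * v⁻¹ = g₀⁻¹ := by
    intro v
    have inj : ∀ j k : ℤ, g₀ ^ j = g₀ ^ k → j = k :=
      fun j k h => injective_zpow_iff_not_isOfFinOrder.2 hg₀ h
    have h1 : v * g₀ * v⁻¹ ∈ N := hNnorm.conj_mem g₀ hg₀N v
    rw [hNg₀] at h1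
    obtain ⟨k, hk⟩ := mem_zpowers_iff.mp h1
    have h2 : v⁻¹ * g₀ * v ∈ N := by
      have := hNnorm.conj_mem g₀ hg₀N v⁻¹
      simpa using this
    rw [hNg₀] at h2
    obtain ⟨l, hl⟩ := mem_zpowers_iff.mp h2
    have hlk : g₀ ^ (k * l) = g₀ ^ (1 : ℤ) := by
      rw [zpow_one, zpow_mul]
      calc (g₀ ^ k) ^ l = (v * g₀ * v⁻¹) ^ l := by rw [hk]
        _ = v * g₀ ^ l * v⁻¹ := by
            rw [← MulAut.conj_apply v g₀, ← map_zpow, MulAut.conj_apply]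
        _ = v * (v⁻¹ * g₀ * v) * v⁻¹ := by rw [hl]
        _ = g₀ := by group
    have hkl : k * l = 1 := inj _ _ hlk
    rcases Int.isUnit_iff.mp (IsUnit.of_mul_eq_one (a := k) l hkl) with h | h
    · left
      rw [h, zpow_one] at hk
      exact hk.symm
    · right
      rw [h] at hk
      rw [← hk]
      simp
  by_cases hcomm : ∀ v : V, v * g₀ = g₀ * v
  · left
    exact VCaux.central_case g₀ hg₀ hcomm
  · right
    push_neg at hcomm
    obtain ⟨t, ht⟩ := hcomm
    classical
    -- the "centralizer" of g₀
    set C : Subgroup V :=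
      { carrier := {v : V | v * g₀ = g₀ * v}
        one_mem' := by simp
        mul_mem' := by
          intro a b ha hb
          show a * b * g₀ = g₀ * (a * b)
          have ha' : a * g₀ = g₀ * a := ha
          have hb' : b * g₀ = g₀ * b := hb
          rw [mul_assoc, hb', ← mul_assoc, ha', mul_assoc]
        inv_mem' := by
          intro a ha
          have ha' : a * g₀ = g₀ * a := ha
          show a⁻¹ * g₀ = g₀ * a⁻¹
          calc a⁻¹ * g₀ = a⁻¹ * (g₀ * a) * a⁻¹ := by group
            _ = a⁻¹ * (a * g₀) * a⁻¹ := by rw [← ha']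
            _ = g₀ * a⁻¹ := by group } with hC
    have hmemC : ∀ v : V, v ∈ C ↔ v * g₀ = g₀ * v := fun v => Iff.rfl
    have htC : t ∉ C := ht
    have hg₀C : g₀ ∈ C := rfl
    have conj_comm_of : ∀ u : V, u * g₀ * u⁻¹ = g₀ → u ∈ C := by
      intro u h
      show u * g₀ = g₀ * u
      have h2 := congrArg (fun z => z * u) h
      simpa [mul_assoc] using h2
    have notmem_flip : ∀ u : V, u ∉ C → u * g₀ * u⁻¹ = g₀⁻¹ := by
      intro u hu
      rcases dich u with h | h
      · exact absurd (conj_comm_of u h) hu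
      · exact h
    have flipconj : ∀ u : V, u * g₀ * u⁻¹ = g₀⁻¹ → u⁻¹ * g₀ * u = g₀⁻¹ := by
      intro u hu
      have h1 : g₀ = u⁻¹ * g₀⁻¹ * u := by rw [← hu]; group
      calc u⁻¹ * g₀ * u = (u⁻¹ * g₀⁻¹ * u)⁻¹ := by group
        _ = g₀⁻¹ := by rw [← h1]
    have prodC : ∀ u v : V, u ∉ C → v ∉ C → u * v ∈ C := by
      intro u v hu hv
      apply conj_comm_of
      have hu' := notmem_flip u hu
      have hv' := notmem_flip v hv
      calc (u*v) * g₀ * (u*v)⁻¹ = u * (v * g₀ * v⁻¹) * u⁻¹ := by group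
        _ = u * g₀⁻¹ * u⁻¹ := by rw [hv']
        _ = (u * g₀ * u⁻¹)⁻¹ := by group
        _ = g₀ := by rw [hu', inv_inv]
    have conjC : ∀ u x : V, x ∈ C → u * x * u⁻¹ ∈ C := by
      intro u x hx
      have hx' : x * g₀ = g₀ * x := hx
      rcases dich u with h | h
      · have hu : u ∈ C := conj_comm_of u h
        exact mul_mem (mul_mem hu hx) (inv_mem hu)
      · apply conj_comm_of
        have hflip := flipconj u h
        have hxinv : x * g₀⁻¹ * x⁻¹ = g₀⁻¹ := by
          have : x * g₀⁻¹ = g₀⁻¹ * x := by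
            have h2 := congrArg (fun z => g₀⁻¹ * z * g₀⁻¹) hx'
            simpa [mul_assoc] using h2.symm
          rw [this, mul_assoc, mul_inv_cancel, mul_one]
        calc (u*x*u⁻¹) * g₀ * (u*x*u⁻¹)⁻¹
            = u * (x * (u⁻¹ * g₀ * u) * x⁻¹) * u⁻¹ := by group
          _ = u * (x * g₀⁻¹ * x⁻¹) * u⁻¹ := by rw [hflip]
          _ = u * g₀⁻¹ * u⁻¹ := by rw [hxinv]
          _ = (u * g₀ * u⁻¹)⁻¹ := by group
          _ = g₀ := by rw [h, inv_inv]
    have htinvC : t⁻¹ ∉ C := by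
      intro h
      have := inv_mem h
      rw [inv_inv] at this
      exact htC this
    have hsplit : ∀ v : V, v ∉ C → t⁻¹ * v ∈ C := fun v hv => prodC t⁻¹ v htinvC hv
    have ht2C : t * t ∈ C := prodC t t htC htC
    have htflip : t * g₀ * t⁻¹ = g₀⁻¹ := notmem_flip t htC
    -- the homomorphism on C
    have hgCfin : ¬IsOfFinOrder (⟨g₀, hg₀C⟩ : C) := by
      intro h
      apply hg₀
      obtain ⟨k, hk0, hk⟩ := isOfFinOrder_iff_pow_eq_one.mp h
      refine isOfFinOrder_iff_pow_eq_one.mpr ⟨k, hk0, ?_⟩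
      have := congrArg Subtype.val hk
      simpa using this
    have hzple : zpowers g₀ ≤ C := zpowers_le.mpr hg₀C
    have hzpC : zpowers (⟨g₀, hg₀C⟩ : C) = (zpowers g₀).subgroupOf C := by
      ext x
      rw [Subgroup.mem_subgroupOf, mem_zpowers_iff, mem_zpowers_iff]
      constructor
      · rintro ⟨k, hk⟩
        exact ⟨k, by simpa [Subtype.ext_iff] using hk⟩
      · rintro ⟨k, hk⟩
        exact ⟨k, by simpa [Subtype.ext_iff] using hk⟩
    haveI hfidxC : (zpowers (⟨g₀, hg₀C⟩ : C)).FiniteIndex := by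
      constructor
      rw [hzpC]
      intro h0
      have hrel := Subgroup.relIndex_mul_index hzple
      have : (zpowers g₀).relIndex C = 0 := h0
      rw [this, zero_mul] at hrel
      exact hfidx.index_ne_zero hrel.symm
    obtain ⟨ψ, hψsurj, hψker⟩ :=
      VCaux.central_case (⟨g₀, hg₀C⟩ : C) hgCfin (fun x => Subtype.ext x.2)
    -- conjugation by t as an endomorphism of C
    set conjT : C →* C :=
      { toFun := fun x => ⟨t * (x : V) * t⁻¹, conjC t x.1 x.2⟩
        map_one' := Subtype.ext (by show t * 1 * t⁻¹ = 1; group)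
        map_mul' := fun x y => Subtype.ext (by
          show t * ((x : V) * y) * t⁻¹ = (t * x * t⁻¹) * (t * y * t⁻¹)
          group) } with hconjT
    have hψcongr : ∀ (a b : V) (ha : a ∈ C) (hb : b ∈ C), a = b →
        ψ ⟨a, ha⟩ = ψ ⟨b, hb⟩ := by
      intro a b ha hb h
      subst h; rfl
    have hmul : ∀ (a b : V) (ha : a ∈ C) (hb : b ∈ C) (hab : a * b ∈ C),
        ψ ⟨a * b, hab⟩ = ψ ⟨a, ha⟩ * ψ ⟨b, hb⟩ := by
      intro a b ha hb hab
      have : (⟨a * b, hab⟩ : C) = ⟨a, ha⟩ * ⟨b, hb⟩ := Subtype.ext rfl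
      rw [this, map_mul]
    have hflip : ∀ (a : V) (ha : a ∈ C) (h2 : t * a * t⁻¹ ∈ C),
        ψ ⟨t * a * t⁻¹, h2⟩ = (ψ ⟨a, ha⟩)⁻¹ := by
      have hχ1 : ∀ x : C, (ψ * (ψ.comp conjT)) x = 1 := by
        apply VCaux.hom_trivial (zpowers (⟨g₀, hg₀C⟩ : C))
        intro x hx
        obtain ⟨k, hk⟩ := mem_zpowers_iff.mp hx
        rw [← hk, map_zpow]
        have hconjg : conjT ⟨g₀, hg₀C⟩ = (⟨g₀, hg₀C⟩ : C)⁻¹ := Subtype.ext (by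
          show t * g₀ * t⁻¹ = g₀⁻¹
          exact htflip)
        have hχg : (ψ * (ψ.comp conjT)) (⟨g₀, hg₀C⟩ : C) = 1 := by
          show ψ ⟨g₀, hg₀C⟩ * ψ (conjT ⟨g₀, hg₀C⟩) = 1
          rw [hconjg, map_inv, mul_inv_cancel]
        rw [hχg, one_zpow]
      intro a ha h2
      have h3 := hχ1 ⟨a, ha⟩
      have h4 : ψ ⟨a, ha⟩ * ψ (conjT ⟨a, ha⟩) = 1 := h3
      have h5 : conjT ⟨a, ha⟩ = ⟨t * a * t⁻¹, h2⟩ := Subtype.ext rfl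
      rw [h5] at h4
      exact (inv_eq_of_mul_eq_one_right h4).symm
    have hflipinv : ∀ (a : V) (ha : a ∈ C) (h2 : t⁻¹ * a * t ∈ C),
        ψ ⟨t⁻¹ * a * t, h2⟩ = (ψ ⟨a, ha⟩)⁻¹ := by
      intro a ha h2
      have h3 : t * (t⁻¹ * a * t) * t⁻¹ ∈ C := conjC t _ h2
      have h4 := hflip (t⁻¹ * a * t) h2 h3
      have h5 : ψ ⟨t * (t⁻¹ * a * t) * t⁻¹, h3⟩ = ψ ⟨a, ha⟩ :=
        hψcongr _ _ _ _ (by group)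
      rw [h5] at h4
      rw [h4, inv_inv]
    have hψt2 : ψ ⟨t * t, ht2C⟩ = 1 := by
      have h1 : t * (t * t) * t⁻¹ ∈ C := conjC t _ ht2C
      have h2 := hflip (t * t) ht2C h1
      have h3 : ψ ⟨t * (t * t) * t⁻¹, h1⟩ = ψ ⟨t * t, ht2C⟩ :=
        hψcongr _ _ _ _ (by group)
      rw [h3] at h2
      have h4 := congrArg Multiplicative.toAdd h2
      rw [toAdd_inv] at h4
      have h5 : Multiplicative.toAdd (ψ ⟨t * t, ht2C⟩) = 0 := by omega
      exact Multiplicative.toAdd.injective (by simpa using h5)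
    -- the homomorphism to the infinite dihedral group
    set Φ : V →* DihedralGroup 0 :=
      { toFun := fun v =>
          if h : v ∈ C then DihedralGroup.r (Multiplicative.toAdd (ψ ⟨v, h⟩) : ℤ)
          else DihedralGroup.sr (Multiplicative.toAdd (ψ ⟨t⁻¹ * v, hsplit v h⟩) : ℤ)
        map_one' := by
          simp only [dif_pos (one_mem C)]
          have h1 : (⟨1, one_mem C⟩ : C) = 1 := rfl
          rw [h1, map_one, DihedralGroup.one_def, toAdd_one]
          rfl
        map_mul' := by
          intro x y
          by_cases hx : x ∈ C <;> by_cases hy : y ∈ C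
          · have hxy : x * y ∈ C := mul_mem hx hy
            simp only [dif_pos hx, dif_pos hy, dif_pos hxy, DihedralGroup.r_mul_r]
            rw [hmul x y hx hy hxy, toAdd_mul]
            rfl
          · have hxy : x * y ∉ C := by
              intro h
              have h2 := mul_mem (inv_mem hx) h
              rw [← mul_assoc, inv_mul_cancel, one_mul] at h2
              exact hy h2
            simp only [dif_pos hx, dif_neg hy, dif_neg hxy, DihedralGroup.r_mul_sr]
            have ha : t⁻¹ * x * t ∈ C := by
              have := conjC t⁻¹ x hx
              rwa [inv_inv] at this
            have hb : t⁻¹ * y ∈ C := hsplit y hy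
            have hd : t⁻¹ * (x * y) = (t⁻¹ * x * t) * (t⁻¹ * y) := by group
            rw [hψcongr _ _ (hsplit (x*y) hxy) (by rw [← hd]; exact hsplit (x*y) hxy) hd]
            rw [hmul _ _ ha hb _, hflipinv x hx ha, toAdd_mul, toAdd_inv]
            congr 1
            show -Multiplicative.toAdd (ψ ⟨x, hx⟩) + Multiplicative.toAdd (ψ ⟨t⁻¹ * y, hb⟩)
              = Multiplicative.toAdd (ψ ⟨t⁻¹ * y, hb⟩) - Multiplicative.toAdd (ψ ⟨x, hx⟩)
            omega
          · have hxy : x * y ∉ C := by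
              intro h
              have h2 := mul_mem h (inv_mem hy)
              rw [mul_assoc, mul_inv_cancel, mul_one] at h2
              exact hx h2
            simp only [dif_neg hx, dif_pos hy, dif_neg hxy, DihedralGroup.sr_mul_r]
            have ha : t⁻¹ * x ∈ C := hsplit x hx
            have hd : t⁻¹ * (x * y) = (t⁻¹ * x) * y := by group
            rw [hψcongr _ _ (hsplit (x*y) hxy) (by rw [← hd]; exact hsplit (x*y) hxy) hd]
            rw [hmul _ _ ha hy _, toAdd_mul]
            rfl
          · have hxy : x * y ∈ C := prodC x y hx hy
            simp only [dif_neg hx, dif_neg hy, dif_pos hxy, DihedralGroup.sr_mul_sr]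
            have ha : t⁻¹ * x ∈ C := hsplit x hx
            have hb : t⁻¹ * y ∈ C := hsplit y hy
            have hxt : x * t ∈ C := prodC x t hx htC
            have hconjmem : t * (t⁻¹ * x) * t⁻¹ ∈ C := conjC t _ ha
            have hd : x * y = (x * t) * (t⁻¹ * y) := by group
            rw [hψcongr _ _ hxy (by rw [← hd]; exact hxy) hd]
            rw [hmul _ _ hxt hb _]
            have he : x * t = (t * (t⁻¹ * x) * t⁻¹) * (t * t) := by group
            rw [hψcongr _ _ hxt (by rw [← he]; exact hxt) he]
            rw [hmul _ _ hconjmem ht2C _, hflip _ ha hconjmem, hψt2, mul_one]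
            rw [toAdd_mul, toAdd_inv]
            congr 1
            show -Multiplicative.toAdd (ψ ⟨t⁻¹ * x, ha⟩) + Multiplicative.toAdd (ψ ⟨t⁻¹ * y, hb⟩)
              = Multiplicative.toAdd (ψ ⟨t⁻¹ * y, hb⟩) - Multiplicative.toAdd (ψ ⟨t⁻¹ * x, ha⟩)
            omega } with hΦ
    have hΦval : ∀ v : V, Φ v = if h : v ∈ C then
        DihedralGroup.r (Multiplicative.toAdd (ψ ⟨v, h⟩) : ZMod 0)
        else DihedralGroup.sr (Multiplicative.toAdd (ψ ⟨t⁻¹ * v, hsplit v h⟩) : ZMod 0) :=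
      fun v => rfl
    refine ⟨Φ, ?_, ?_⟩
    · intro d
      cases d with
      | r i =>
          obtain ⟨c, hc⟩ := hψsurj (Multiplicative.ofAdd i)
          refine ⟨c.1, ?_⟩
          rw [hΦval c.1, dif_pos c.2]
          rw [Subtype.coe_eta, hc]
          rfl
      | sr i =>
          obtain ⟨c, hc⟩ := hψsurj (Multiplicative.ofAdd i)
          have hv : t * c.1 ∉ C := by
            intro h
            have h2 := mul_mem h (inv_mem c.2)
            rw [mul_assoc, mul_inv_cancel, mul_one] at h2
            exact htC h2
          refine ⟨t * c.1, ?_⟩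
          rw [hΦval (t * c.1), dif_neg hv]
          have hd : t⁻¹ * (t * c.1) = c.1 := by group
          rw [hψcongr _ _ (hsplit _ hv) (hd ▸ c.2) hd]
          rw [Subtype.coe_eta, hc]
          rfl
    · have hkermem : ∀ v : V, Φ v = 1 → ∃ h : v ∈ C, ψ ⟨v, h⟩ = 1 := by
        intro v hv
        rw [hΦval v] at hv
        by_cases h : v ∈ C
        · refine ⟨h, ?_⟩
          rw [dif_pos h, DihedralGroup.one_def] at hv
          have h2 := DihedralGroup.r.inj hv
          have h3 : Multiplicative.toAdd (ψ ⟨v, h⟩) = (0:ℤ) := h2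
          exact Multiplicative.toAdd.injective (by simpa using h3)
        · exfalso
          rw [dif_neg h, DihedralGroup.one_def] at hv
          cases hv
      have hinj : Function.Injective
          (fun k : Φ.ker => (⟨⟨k.1, (hkermem k.1 k.2).choose⟩,
            (hkermem k.1 k.2).choose_spec⟩ : ψ.ker)) := by
        intro a b hab
        have := congrArg (fun z : ψ.ker => ((z : C) : V)) hab
        exact Subtype.ext this
      exact Finite.of_injective _ hinj
end

section
/- Let N be a group with a normal free abelian subgroup L ≅ ℤ^r of index 4 such that N/L ≅ ℤ/4 and N contains an element of order 4. Suppose further N contains a central element z of order 2 with N/⟨z⟩ ≅ ℤ^r ⋊ ℤ/2 (ℤ/2 acting by -1) and the preimage of ℤ^r splits back as ℤ/2 × ℤ^r. Then N ≅ ℤ^r ⋊ ℤ/4 where the generator of ℤ/4 acts on ℤ^r by multiplication by -1. -/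
private lemma auxTF {r : ℕ} (a : Multiplicative (Fin r → ℤ)) (n : ℕ) (hn : n ≠ 0)
    (h : a ^ n = 1) : a = 1 := by
  have h' : n • (Multiplicative.toAdd a) = 0 := by
    have := congrArg Multiplicative.toAdd h
    simpa using this
  have h2 : Multiplicative.toAdd a = 0 := by
    funext i
    have := congrFun h' i
    simp only [Pi.smul_apply, Pi.zero_apply, smul_eq_mul, nsmul_eq_mul] at this
    have hn' : (n : ℤ) ≠ 0 := by exact_mod_cast hn
    exact (mul_eq_zero.mp this).resolve_left hn'
  simpa using congrArg Multiplicative.ofAdd h2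

private lemma auxPowPar {G : Type*} [Monoid G] {x : G} (hx : x * x = 1) (m : ℕ) :
    x ^ m = x ^ (m % 2) := by
  conv_lhs => rw [← Nat.div_add_mod m 2]
  rw [pow_add, pow_mul]
  have h2 : x ^ 2 = 1 := by rw [pow_two, hx]
  rw [h2, one_pow, one_mul]

private lemma auxPowParCongr {G : Type*} [Monoid G] {x : G} (hx : x * x = 1) {m n : ℕ}
    (h : m % 2 = n % 2) : x ^ m = x ^ n := by
  rw [auxPowPar hx m, auxPowPar hx n, h]

private lemma auxInvSq {G : Type*} [CommGroup G] :
    ((MulEquiv.inv G : MulAut G)) * (MulEquiv.inv G : MulAut G) = 1 := by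
  ext a
  simp [MulAut.mul_apply]

private lemma auxInvPow {G : Type*} [CommGroup G] (n : ℕ) (a : G) :
    (((MulEquiv.inv G : MulAut G) ^ n)) a = a ^ ((-1 : ℤ) ^ n) := by
  induction n generalizing a with
  | zero => simp
  | succ n ih =>
    rw [pow_succ', MulAut.mul_apply, ih]
    show (a ^ ((-1 : ℤ) ^ n))⁻¹ = _
    rw [← zpow_neg, pow_succ]
    ring_nf

private lemma auxValZero {n : ℕ} (s : Multiplicative (ZMod n))
    (h : (Multiplicative.toAdd s).val = 0) : s = 1 := by
  have h2 : Multiplicative.toAdd s = 0 := (ZMod.val_eq_zero _).mp h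
  simpa using congrArg Multiplicative.ofAdd h2

/-- Let `N` be a group with a normal free abelian subgroup `L ≅ ℤʳ` of index `4`,
`N/L ≅ ℤ/4`, containing an element of order `4`, and containing a central element `z` of
order `2` with `N/⟨z⟩ ≅ ℤʳ ⋊ ℤ/2` (the involution acting by `-1`) such that the preimage
of the `ℤʳ`-factor splits back as `ℤ/2 × ℤʳ`.  Then `N ≅ ℤʳ ⋊ ℤ/4`, where the generator
of `ℤ/4` acts on `ℤʳ` by multiplication by `-1`. -/
theorem normalizer_structure (r : ℕ) (N : Type) [Group N]
    (L : Subgroup N) [L.Normal]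
    (eL : Nonempty (L ≃* Multiplicative (Fin r → ℤ)))
    (hidx : L.index = 4)
    (eQ : Nonempty ((N ⧸ L) ≃* Multiplicative (ZMod 4)))
    (ht : ∃ t : N, orderOf t = 4)
    (z : N) (hz : z ∈ Subgroup.center N) (hzo : orderOf z = 2)
    [(Subgroup.zpowers z).Normal]
    (hquot : ∃ ψ : Multiplicative (ZMod 2) →* MulAut (Multiplicative (Fin r → ℤ)),
      (∀ (c : Multiplicative (ZMod 2)) (a : Multiplicative (Fin r → ℤ)),
        ψ c a = a ^ ((-1 : ℤ) ^ (Multiplicative.toAdd c).val)) ∧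
      ∃ e : (N ⧸ Subgroup.zpowers z) ≃*
          Multiplicative (Fin r → ℤ) ⋊[ψ] Multiplicative (ZMod 2),
        Nonempty
          ((Subgroup.comap
              ((e.toMonoidHom).comp (QuotientGroup.mk' (Subgroup.zpowers z)))
              (SemidirectProduct.inl.range)) ≃*
            Multiplicative (ZMod 2) × Multiplicative (Fin r → ℤ))) :
    ∃ φ : Multiplicative (ZMod 4) →* MulAut (Multiplicative (Fin r → ℤ)),
      (∀ (c : Multiplicative (ZMod 4)) (a : Multiplicative (Fin r → ℤ)),
        φ c a = a ^ ((-1 : ℤ) ^ (Multiplicative.toAdd c).val)) ∧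
      Nonempty (N ≃* Multiplicative (Fin r → ℤ) ⋊[φ] Multiplicative (ZMod 4)) := by
  classical
  obtain ⟨t, ht4⟩ := ht
  obtain ⟨ψ, hψ, e, -⟩ := hquot
  obtain ⟨e0⟩ := eL
  obtain ⟨eQ0⟩ := eQ
  -- the action of ZMod 4 by inversion
  let φ : Multiplicative (ZMod 4) →* MulAut (Multiplicative (Fin r → ℤ)) :=
    { toFun := fun c =>
        (MulEquiv.inv (Multiplicative (Fin r → ℤ)) : MulAut (Multiplicative (Fin r → ℤ)))
          ^ (Multiplicative.toAdd c).val
      map_one' := by simp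
      map_mul' := by
        intro a b
        rw [← pow_add]
        refine auxPowParCongr auxInvSq ?_
        rw [toAdd_mul, ZMod.val_add]
        omega }
  have hφ : ∀ (c : Multiplicative (ZMod 4)) (a : Multiplicative (Fin r → ℤ)),
      φ c a = a ^ ((-1 : ℤ) ^ (Multiplicative.toAdd c).val) := fun c a => auxInvPow _ _
  refine ⟨φ, hφ, ?_⟩
  -- basic order facts
  have ht4' : t ^ 4 = 1 := by rw [← ht4]; exact pow_orderOf_eq_one t
  have ht2 : t ^ 2 ≠ 1 := by
    intro h
    have h2 := orderOf_dvd_iff_pow_eq_one.mpr h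
    rw [ht4] at h2
    norm_num at h2
  have hz2 : z ^ 2 = 1 := by rw [← hzo]; exact pow_orderOf_eq_one z
  have hzpow : ∀ x ∈ Subgroup.zpowers z, x ^ 2 = 1 := by
    rintro x ⟨k, rfl⟩
    have h1 : (z ^ k) ^ (2 : ℕ) = (z ^ (2 : ℕ)) ^ k := by
      rw [← zpow_natCast (z ^ k), ← zpow_mul, ← zpow_natCast z, ← zpow_mul, mul_comm]
    rw [h1, hz2, one_zpow]
  -- L is torsion-free
  have tfL : ∀ x ∈ L, ∀ n : ℕ, n ≠ 0 → x ^ n = 1 → x = 1 := by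
    intro x hx n hn h
    have h1 : (⟨x, hx⟩ : L) ^ n = 1 := by
      ext
      simpa using h
    have h2 : e0 ⟨x, hx⟩ ^ n = 1 := by rw [← map_pow, h1, map_one]
    have h3 := auxTF _ n hn h2
    have h4 : (⟨x, hx⟩ : L) = 1 := by
      apply e0.injective
      rw [h3, map_one]
    simpa using congrArg Subtype.val h4
  -- the composite map to the semidirect product
  let q : N →* Multiplicative (Fin r → ℤ) ⋊[ψ] Multiplicative (ZMod 2) :=
    e.toMonoidHom.comp (QuotientGroup.mk' (Subgroup.zpowers z))
  have hq1 : ∀ x : N, q x = 1 → x ^ 2 = 1 := by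
    intro x hx
    have h1 : QuotientGroup.mk' (Subgroup.zpowers z) x = 1 := by
      apply e.injective
      rw [map_one]
      exact hx
    have h2 : x ∈ (QuotientGroup.mk' (Subgroup.zpowers z)).ker := by
      rw [MonoidHom.mem_ker]; exact h1
    rw [QuotientGroup.ker_mk'] at h2
    exact hzpow x h2
  have hval2 : ∀ s : Multiplicative (ZMod 2),
      (Multiplicative.toAdd s).val = 0 ∨ (Multiplicative.toAdd s).val = 1 := by
    intro s
    have := ZMod.val_lt (Multiplicative.toAdd s)
    omega
  -- elements with nontrivial right component square to one
  have hsq : ∀ x : Multiplicative (Fin r → ℤ) ⋊[ψ] Multiplicative (ZMod 2),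
      (Multiplicative.toAdd x.right).val = 1 → x * x = 1 := by
    intro x hx
    have hleft : (x * x).left = (1 : Multiplicative (Fin r → ℤ) ⋊[ψ] _).left := by
      rw [SemidirectProduct.mul_left, hψ, hx]
      simp
    have hright : (x * x).right = (1 : Multiplicative (Fin r → ℤ) ⋊[ψ] _).right := by
      rw [SemidirectProduct.mul_right, SemidirectProduct.one_right]
      have h2 : ∀ c : ZMod 2, c + c = 0 := by decide
      have h3 := h2 (Multiplicative.toAdd x.right)
      simpa using congrArg Multiplicative.ofAdd h3
    exact SemidirectProduct.ext hleft hright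
  -- every element of L maps into the Z^r factor
  have hL0 : ∀ x ∈ L, (Multiplicative.toAdd (q x).right).val = 0 := by
    intro x hx
    rcases hval2 (q x).right with h | h
    · exact h
    · exfalso
      have h1 : q (x * x) = 1 := by rw [map_mul]; exact hsq _ h
      have h2 : (x * x) ^ 2 = 1 := hq1 _ h1
      have h3 : x = 1 := by
        refine tfL x hx 4 (by norm_num) ?_
        have h4 : (x * x) ^ 2 = x ^ 4 := by
          rw [← pow_two, ← pow_mul, show 2 * 2 = 4 from rfl]
        rw [← h4, h2]
      have h5 : q x = 1 := by rw [h3, map_one]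
      rw [h5] at h
      simp at h
  -- t maps outside the Z^r factor
  have htR : (Multiplicative.toAdd (q t).right).val = 1 := by
    rcases hval2 (q t).right with h | h
    · exfalso
      have hr : (q t).right = 1 := auxValZero _ h
      have hin : q t = SemidirectProduct.inl (q t).left := by
        conv_lhs => rw [← SemidirectProduct.inl_left_mul_inr_right (q t)]
        rw [hr, map_one, mul_one]
      have h4 : (1 : Multiplicative (Fin r → ℤ) ⋊[ψ] Multiplicative (ZMod 2))
          = SemidirectProduct.inl ((q t).left ^ 4) := by
        calc (1 : Multiplicative (Fin r → ℤ) ⋊[ψ] Multiplicative (ZMod 2))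
            = q (t ^ 4) := by rw [ht4', map_one]
          _ = (q t) ^ 4 := by rw [map_pow]
          _ = SemidirectProduct.inl ((q t).left) ^ 4 := by rw [← hin]
          _ = SemidirectProduct.inl ((q t).left ^ 4) := by rw [map_pow]
      have h5 : (q t).left ^ 4 = 1 := by
        apply SemidirectProduct.inl_injective (φ := ψ)
        rw [map_one, ← h4]
      have h6 : (q t).left = 1 := auxTF _ 4 (by norm_num) h5
      have h7 : q t = 1 := by rw [hin, h6, map_one]
      exact ht2 (hq1 t h7)
    · exact h
  -- conjugation in a semidirect product with abelian kernel
  have conjlem : ∀ (x : Multiplicative (Fin r → ℤ) ⋊[ψ] Multiplicative (ZMod 2))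
      (n : Multiplicative (Fin r → ℤ)),
      x * SemidirectProduct.inl n * x⁻¹ = SemidirectProduct.inl (ψ x.right n) := by
    intro x n
    refine SemidirectProduct.ext ?_ ?_
    · show (x * SemidirectProduct.inl n * x⁻¹).left = (SemidirectProduct.inl (ψ x.right n)).left
      rw [SemidirectProduct.mul_left, SemidirectProduct.mul_left,
        SemidirectProduct.inv_left, SemidirectProduct.left_inl,
        SemidirectProduct.mul_right, SemidirectProduct.right_inl, mul_one,
        SemidirectProduct.left_inl]
      have hy : (ψ x.right) ((ψ x.right⁻¹) x.left⁻¹) = x.left⁻¹ := by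
        rw [map_inv ψ, MulAut.inv_def]
        exact (ψ x.right).apply_symm_apply x.left⁻¹
      rw [hy, mul_comm x.left, mul_assoc, mul_inv_cancel, mul_one]
    · show (x * SemidirectProduct.inl n * x⁻¹).right
          = (SemidirectProduct.inl (ψ x.right n)).right
      rw [SemidirectProduct.mul_right, SemidirectProduct.mul_right,
        SemidirectProduct.right_inl, SemidirectProduct.inv_right, mul_one,
        mul_inv_cancel, SemidirectProduct.right_inl]
  -- t conjugates L by inversion
  have hconj : ∀ a ∈ L, t * a * t⁻¹ = a⁻¹ := by
    intro a ha
    have haL : t * a * t⁻¹ ∈ L := ‹L.Normal›.conj_mem a ha t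
    have hmem : t * a * t⁻¹ * a ∈ L := mul_mem haL ha
    obtain ⟨la, hla⟩ : ∃ la, (q a).left = la := ⟨_, rfl⟩
    have hpsi : ψ (q t).right la = la⁻¹ := by
      rw [hψ, htR]
      simp
    have hqa : q a = SemidirectProduct.inl la := by
      conv_lhs => rw [← SemidirectProduct.inl_left_mul_inr_right (q a)]
      rw [auxValZero _ (hL0 a ha), map_one, mul_one, hla]
    have key : q (t * a * t⁻¹ * a) = 1 := by
      have h1 : q (t * a * t⁻¹) = SemidirectProduct.inl (la⁻¹) := by
        rw [map_mul, map_mul, map_inv, hqa, conjlem, hpsi]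
      rw [map_mul, h1, hqa, ← map_mul, inv_mul_cancel, map_one]
    have h2 : (t * a * t⁻¹ * a) ^ 2 = 1 := hq1 _ key
    have h3 : t * a * t⁻¹ * a = 1 := tfL _ hmem 2 (by norm_num) h2
    exact mul_eq_one_iff_eq_inv.mp h3
  -- powers of t conjugate L by alternating inversion
  have hconjn : ∀ n : ℕ, ∀ a ∈ L, t ^ n * a * (t ^ n)⁻¹ = a ^ ((-1 : ℤ) ^ n) := by
    intro n
    induction n with
    | zero => intro a ha; simp
    | succ n ih =>
      intro a ha
      have step : t ^ (n + 1) * a * (t ^ (n + 1))⁻¹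
          = t ^ n * (t * a * t⁻¹) * (t ^ n)⁻¹ := by
        rw [pow_succ]
        group
      rw [step, hconj a ha, ih a⁻¹ (inv_mem ha), inv_zpow, ← zpow_neg, pow_succ]
      congr 1
      ring
  -- the embedding of Z^r into N
  let j : Multiplicative (Fin r → ℤ) →* N := L.subtype.comp e0.symm.toMonoidHom
  have hjL : ∀ a, j a ∈ L := fun a => (e0.symm a).2
  have hjinj : Function.Injective j := L.subtype_injective.comp e0.symm.injective
  -- the homomorphism ZMod 4 → N, c ↦ t ^ c.val
  have hpow4 : ∀ m : ℕ, t ^ (m % 4) = t ^ m := by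
    intro m
    conv_rhs => rw [← pow_mod_orderOf, ht4]
  let g : Multiplicative (ZMod 4) →* N :=
    { toFun := fun c => t ^ (Multiplicative.toAdd c).val
      map_one' := by simp
      map_mul' := by
        intro a b
        show t ^ (Multiplicative.toAdd (a * b)).val
            = t ^ (Multiplicative.toAdd a).val * t ^ (Multiplicative.toAdd b).val
        rw [toAdd_mul, ZMod.val_add, hpow4, pow_add] }
  have compat : ∀ c : Multiplicative (ZMod 4),
      j.comp ((φ c)).toMonoidHom = (MulAut.conj (g c)).toMonoidHom.comp j := by
    intro c
    refine MonoidHom.ext fun a => ?_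
    show j (φ c a) = g c * j a * (g c)⁻¹
    rw [hφ, map_zpow]
    exact (hconjn (Multiplicative.toAdd c).val (j a) (hjL a)).symm
  let F := SemidirectProduct.lift j g compat
  have Fval : ∀ (a : Multiplicative (Fin r → ℤ)) (c : Multiplicative (ZMod 4)),
      F (SemidirectProduct.inl a * SemidirectProduct.inr c) = j a * g c := by
    intro a c
    rw [map_mul, SemidirectProduct.lift_inl, SemidirectProduct.lift_inr]
  -- injectivity
  have hFinj : Function.Injective F := by
    rw [injective_iff_map_eq_one]
    intro x hx
    rw [← SemidirectProduct.inl_left_mul_inr_right x] at hx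
    rw [Fval] at hx
    have hx' : j x.left * t ^ (Multiplicative.toAdd x.right).val = 1 := hx
    have hvt : t ^ (Multiplicative.toAdd x.right).val ∈ L := by
      have h1 : j x.left = (t ^ (Multiplicative.toAdd x.right).val)⁻¹ :=
        mul_eq_one_iff_eq_inv.mp hx'
      have h2 : t ^ (Multiplicative.toAdd x.right).val = (j x.left)⁻¹ := by
        rw [h1, inv_inv]
      rw [h2]
      exact inv_mem (hjL _)
    have hvt4 : (t ^ (Multiplicative.toAdd x.right).val) ^ 4 = 1 := by
      rw [← pow_mul, mul_comm, pow_mul, ht4', one_pow]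
    have hv1 : t ^ (Multiplicative.toAdd x.right).val = 1 := tfL _ hvt 4 (by norm_num) hvt4
    have hdvd : 4 ∣ (Multiplicative.toAdd x.right).val := by
      have := orderOf_dvd_iff_pow_eq_one.mpr hv1
      rwa [ht4] at this
    have hvlt : (Multiplicative.toAdd x.right).val < 4 := ZMod.val_lt _
    have hv0 : (Multiplicative.toAdd x.right).val = 0 := by omega
    have hr : x.right = 1 := auxValZero _ hv0
    have hl : x.left = 1 := by
      apply hjinj
      rw [map_one]
      rw [hv0, pow_zero, mul_one] at hx'
      exact hx'
    rw [← SemidirectProduct.inl_left_mul_inr_right x, hr, hl, map_one, map_one, mul_one]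
  -- surjectivity, via the quotient N / L
  haveI finQ : Finite (N ⧸ L) := Finite.of_equiv _ eQ0.toEquiv.symm
  have cardQ : Nat.card (N ⧸ L) = 4 := by
    rw [Nat.card_congr eQ0.toEquiv, Nat.card_congr (Multiplicative.toAdd), Nat.card_zmod]
  have hπt2 : (QuotientGroup.mk' L t) ^ 2 ≠ 1 := by
    intro h
    have h1 : t ^ 2 ∈ (QuotientGroup.mk' L).ker := by
      rw [MonoidHom.mem_ker, map_pow]
      exact h
    rw [QuotientGroup.ker_mk'] at h1
    have h2 : t ^ 2 = 1 := by
      refine tfL _ h1 2 (by norm_num) ?_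
      rw [← pow_mul, show 2 * 2 = 4 from rfl]
      exact ht4'
    exact ht2 h2
  have hordπ : orderOf (QuotientGroup.mk' L t) = 4 := by
    have hdvd : orderOf (QuotientGroup.mk' L t) ∣ 4 := by
      rw [← ht4]
      exact orderOf_map_dvd _ t
    have hndvd : ¬ orderOf (QuotientGroup.mk' L t) ∣ 2 := by
      intro h
      exact hπt2 (orderOf_dvd_iff_pow_eq_one.mp h)
    have h1 : orderOf (QuotientGroup.mk' L t) ≤ 4 := Nat.le_of_dvd (by norm_num) hdvd
    have h2 : 0 < orderOf (QuotientGroup.mk' L t) :=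
      Nat.pos_of_dvd_of_pos hdvd (by norm_num)
    set d := orderOf (QuotientGroup.mk' L t) with hd
    interval_cases d
    · exact absurd (by norm_num) hndvd
    · exact absurd (by norm_num) hndvd
    · exact absurd hdvd (by norm_num)
    · rfl
  have htop : Subgroup.zpowers (QuotientGroup.mk' L t) = ⊤ := by
    apply Subgroup.eq_top_of_card_eq
    rw [Nat.card_zpowers, hordπ, cardQ]
  have hFsurj : Function.Surjective F := by
    intro n
    have hmem : QuotientGroup.mk' L n ∈ Subgroup.zpowers (QuotientGroup.mk' L t) := by
      rw [htop]; exact Subgroup.mem_top _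
    obtain ⟨k, hk0⟩ := hmem
    have hk : (QuotientGroup.mk' L t) ^ k = QuotientGroup.mk' L n := hk0
    have hLmem : (t ^ k)⁻¹ * n ∈ L := by
      have h1 : (t ^ k)⁻¹ * n ∈ (QuotientGroup.mk' L).ker := by
        rw [MonoidHom.mem_ker, map_mul, map_inv, map_zpow, hk]
        simp
      rwa [QuotientGroup.ker_mk'] at h1
    have hl2 : t ^ k * ((t ^ k)⁻¹ * n) * (t ^ k)⁻¹ ∈ L :=
      ‹L.Normal›.conj_mem _ hLmem (t ^ k)
    have hzp : t ^ (((k : ZMod 4).val : ℤ)) = t ^ k := by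
      have hdvd : ((4 : ℕ) : ℤ) ∣ (k - (((k : ZMod 4).val : ℤ))) := by
        have hc : (((k - (((k : ZMod 4).val : ℤ))) : ℤ) : ZMod 4) = 0 := by
          push_cast
          simp [ZMod.natCast_val, ZMod.cast_id]
        exact (ZMod.intCast_zmod_eq_zero_iff_dvd _ 4).mp hc
      have h1 : t ^ (k - (((k : ZMod 4).val : ℤ))) = 1 := by
        apply orderOf_dvd_iff_zpow_eq_one.mp
        rw [ht4]
        exact_mod_cast hdvd
      calc t ^ (((k : ZMod 4).val : ℤ))
          = t ^ (((k : ZMod 4).val : ℤ)) * t ^ (k - (((k : ZMod 4).val : ℤ))) := by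
            rw [h1, mul_one]
        _ = t ^ k := by
            rw [← zpow_add]
            congr 1
            ring
    refine ⟨SemidirectProduct.inl (e0 ⟨t ^ k * ((t ^ k)⁻¹ * n) * (t ^ k)⁻¹, hl2⟩)
      * SemidirectProduct.inr (Multiplicative.ofAdd ((k : ZMod 4))), ?_⟩
    rw [Fval]
    have hj1 : j (e0 ⟨t ^ k * ((t ^ k)⁻¹ * n) * (t ^ k)⁻¹, hl2⟩)
        = t ^ k * ((t ^ k)⁻¹ * n) * (t ^ k)⁻¹ := by
      show ((e0.symm (e0 ⟨_, hl2⟩) : L) : N) = _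
      rw [MulEquiv.symm_apply_apply]
    have hg1 : g (Multiplicative.ofAdd ((k : ZMod 4))) = t ^ k := by
      show t ^ (Multiplicative.toAdd (Multiplicative.ofAdd ((k : ZMod 4)))).val = t ^ k
      rw [toAdd_ofAdd, ← zpow_natCast, hzp]
    rw [hj1, hg1]
    group
  exact ⟨(MulEquiv.ofBijective F ⟨hFinj, hFsurj⟩).symm⟩
end
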